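/- Let μ_1, …, μ_N be probability mass functions on a finite set, and let μ̄ = (1/N)∑_v μ_v be their average. Then the average L¹ deviation Ψ = (1/N)∑_v ‖μ_v − μ̄‖₁ satisfies Ψ ≤ 2(1 − ∑_d μ̄(d)²) < 2, with the bound 2∑_d μ̄(d)(1−μ̄(d)) attained exactly when every μ_v is a point mass (Dirac measure). -/

import Mathlib

open Finset

lemma aux_abs_le14 (x m : ℝ) (hx0 : 0 ≤ x) (hx1 : x ≤ 1) (hm0 : 0 ≤ m) (hm1 : m ≤ 1) :
    |x - m| ≤ x + m - 2 * x * m := by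
  rcases le_total x m with h | h
  · rw [abs_of_nonpos (by linarith)]; nlinarith
  · rw [abs_of_nonneg (by linarith)]; nlinarith

theorem stmt14 {D : Type*} [Fintype D] [DecidableEq D] [Nonempty D]
    (N : ℕ) (hN : 0 < N) (μ : Fin N → D → ℝ)
    (hpos : ∀ v d, 0 ≤ μ v d) (hsum : ∀ v, ∑ d, μ v d = 1) :
    let μbar : D → ℝ := fun d => (∑ v, μ v d) / N
    let Ψ : ℝ := (1 / N) * ∑ v, ∑ d, |μ v d - μbar d|
    Ψ ≤ 2 * (1 - ∑ d, (μbar d) ^ 2) ∧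
    2 * (1 - ∑ d, (μbar d) ^ 2) < 2 ∧
    (Ψ = 2 * ∑ d, μbar d * (1 - μbar d) ↔
      ∀ v, ∃ x, ∀ d, μ v d = if d = x then 1 else 0) := by
  intro μbar Ψ
  have hNR : (0 : ℝ) < N := by exact_mod_cast hN
  have hbar : ∀ d, μbar d = (∑ v, μ v d) / N := fun d => rfl
  have hΨ : Ψ = (1 / N) * ∑ v, ∑ d, |μ v d - μbar d| := rfl
  have hμsumd : ∀ d, ∑ v, μ v d = N * μbar d := by
    intro d; rw [hbar]; field_simp
  have hmnn : ∀ d, 0 ≤ μbar d := by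
    intro d; rw [hbar]
    exact div_nonneg (Finset.sum_nonneg fun v _ => hpos v d) hNR.le
  have hmsum : ∑ d, μbar d = 1 := by
    have : ∑ d, μbar d = (∑ d, ∑ v, μ v d) / N := by
      rw [← Finset.sum_div]
    rw [this, Finset.sum_comm]
    simp only [hsum]
    simp
    omega
  have hμle1 : ∀ v d, μ v d ≤ 1 := by
    intro v d
    calc μ v d ≤ ∑ d', μ v d' := Finset.single_le_sum (fun d' _ => hpos v d') (mem_univ d)
    _ = 1 := hsum v
  have hmle1 : ∀ d, μbar d ≤ 1 := by
    intro d
    calc μbar d ≤ ∑ d', μbar d' := Finset.single_le_sum (fun d' _ => hmnn d') (mem_univ d)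
    _ = 1 := hmsum
  have hμlem : ∀ v d, μ v d ≤ N * μbar d := by
    intro v d
    rw [← hμsumd]
    exact Finset.single_le_sum (fun v' _ => hpos v' d) (mem_univ v)
  have hle : ∀ v d, |μ v d - μbar d| ≤ μ v d + μbar d - 2 * μ v d * μbar d :=
    fun v d => aux_abs_le14 _ _ (hpos v d) (hμle1 v d) (hmnn d) (hmle1 d)
  -- key sum identity
  have key : ∑ v, ∑ d, (μ v d + μbar d - 2 * μ v d * μbar d)
      = (N : ℝ) * (2 - 2 * ∑ d, (μbar d) ^ 2) := by
    have h1 : ∑ v : Fin N, ∑ d, μ v d * μbar d = (N : ℝ) * ∑ d, (μbar d) ^ 2 := by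
      rw [Finset.sum_comm, Finset.mul_sum]
      refine Finset.sum_congr rfl fun d _ => ?_
      rw [← Finset.sum_mul, hμsumd d]; ring
    have h2 : ∀ v : Fin N, ∑ d, (μ v d + μbar d - 2 * μ v d * μbar d)
        = 2 - 2 * ∑ d, μ v d * μbar d := by
      intro v
      have : ∑ d, (μ v d + μbar d - 2 * μ v d * μbar d)
          = (∑ d, μ v d) + (∑ d, μbar d) - 2 * ∑ d, μ v d * μbar d := by
        rw [Finset.mul_sum, ← Finset.sum_add_distrib, ← Finset.sum_sub_distrib]
        exact Finset.sum_congr rfl fun d _ => by ring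
      rw [this, hsum v, hmsum]; ring
    simp only [h2]
    rw [Finset.sum_sub_distrib, ← Finset.mul_sum, h1]
    simp
    ring
  have hSle : ∑ v, ∑ d, |μ v d - μbar d| ≤ (N : ℝ) * (2 - 2 * ∑ d, (μbar d) ^ 2) := by
    rw [← key]
    exact Finset.sum_le_sum fun v _ => Finset.sum_le_sum fun d _ => hle v d
  refine ⟨?_, ?_, ?_⟩
  · rw [hΨ]
    calc (1 / (N : ℝ)) * ∑ v, ∑ d, |μ v d - μbar d|
        ≤ (1 / (N : ℝ)) * ((N : ℝ) * (2 - 2 * ∑ d, (μbar d) ^ 2)) :=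
          mul_le_mul_of_nonneg_left hSle (by positivity)
      _ = 2 * (1 - ∑ d, (μbar d) ^ 2)  := by field_simp
  · have : ∃ d, 0 < μbar d := by
      by_contra hc
      push_neg at hc
      have : ∑ d, μbar d ≤ 0 := Finset.sum_nonpos fun d _ => hc d
      rw [hmsum] at this; linarith
    obtain ⟨d, hd⟩ := this
    have : (μbar d) ^ 2 ≤ ∑ d', (μbar d') ^ 2 :=
      Finset.single_le_sum (f := fun d' => (μbar d') ^ 2) (fun d' _ => sq_nonneg _) (mem_univ d)
    nlinarith
  · -- equality iff point masses
    have hrhs : 2 * ∑ d, μbar d * (1 - μbar d) = 2 * (1 - ∑ d, (μbar d) ^ 2) := by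
      have : ∑ d, μbar d * (1 - μbar d) = (∑ d, μbar d) - ∑ d, (μbar d) ^ 2 := by
        rw [← Finset.sum_sub_distrib]
        exact Finset.sum_congr rfl fun d _ => by ring
      rw [this, hmsum]
    rw [hrhs, hΨ]
    have hΨiff : (1 / (N : ℝ)) * ∑ v, ∑ d, |μ v d - μbar d| = 2 * (1 - ∑ d, (μbar d) ^ 2)
        ↔ ∑ v, ∑ d, |μ v d - μbar d|
          = ∑ v, ∑ d, (μ v d + μbar d - 2 * μ v d * μbar d) := by
      rw [key]
      constructor
      · intro h
        field_simp at h
        rw [h]; ring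
      · intro h
        rw [h]; field_simp
    rw [hΨiff]
    have hptwise : (∑ v, ∑ d, |μ v d - μbar d|
          = ∑ v, ∑ d, (μ v d + μbar d - 2 * μ v d * μbar d))
        ↔ ∀ v, ∀ d, |μ v d - μbar d| = μ v d + μbar d - 2 * μ v d * μbar d := by
      constructor
      · intro h v d
        have houter := (Finset.sum_eq_sum_iff_of_le
          (fun v _ => Finset.sum_le_sum fun d _ => hle v d)).1 h v (mem_univ v)
        exact (Finset.sum_eq_sum_iff_of_le (fun d _ => hle v d)).1 houter d (mem_univ d)
      · intro h
        exact Finset.sum_congr rfl fun v _ => Finset.sum_congr rfl fun d _ => h v d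
    rw [hptwise]
    constructor
    · intro h v
      -- first: every value is 0 or 1
      have h01 : ∀ d, μ v d = 0 ∨ μ v d = 1 := by
        intro d
        by_contra hc
        push_neg at hc
        obtain ⟨hne0, hne1⟩ := hc
        have hx0 : 0 < μ v d := lt_of_le_of_ne (hpos v d) (Ne.symm hne0)
        have hx1 : μ v d < 1 := lt_of_le_of_ne (hμle1 v d) hne1
        have hm0 : 0 < μbar d := by
          have := hμlem v d
          nlinarith
        have heq := h v d
        rcases le_total (μ v d) (μbar d) with hc1 | hc1
        · rw [abs_of_nonpos (by linarith)] at heq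
          have hm1 : μbar d = 1 := by nlinarith
          -- then all other μbar are 0, forcing μ v supported on d only
          have hz : ∀ d' ∈ (univ : Finset D).erase d, μbar d' = 0 := by
            have hsplit := Finset.add_sum_erase (univ : Finset D) μbar (mem_univ d)
            rw [hmsum, hm1] at hsplit
            have hzero : ∑ d' ∈ (univ : Finset D).erase d, μbar d' = 0 := by linarith
            intro d' hd'
            have := (Finset.sum_eq_zero_iff_of_nonneg (fun d'' _ => hmnn d'')).1 hzero d' hd'
            exact this
          have hμz : ∀ d' ∈ (univ : Finset D).erase d, μ v d' = 0 := by
            intro d' hd'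
            have h1 := hμlem v d'
            have h2 := hz d' hd'
            have := hpos v d'
            rw [h2] at h1
            linarith [h1]
          have hsplit := Finset.add_sum_erase (univ : Finset D) (μ v) (mem_univ d)
          rw [hsum v, Finset.sum_eq_zero hμz] at hsplit
          linarith
        · rw [abs_of_nonneg (by linarith)] at heq
          nlinarith
      -- find the support point
      have hex : ∃ d, μ v d = 1 := by
        by_contra hc
        push_neg at hc
        have hz : ∀ d, μ v d = 0 := fun d => (h01 d).resolve_right (hc d)
        have hs := hsum v
        rw [Finset.sum_eq_zero (fun d _ => hz d)] at hs
        norm_num at hs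
      obtain ⟨x, hx⟩ := hex
      refine ⟨x, fun d => ?_⟩
      by_cases hd : d = x
      · simp [hd, hx]
      · simp only [hd, if_false]
        have hsplit := Finset.add_sum_erase (univ : Finset D) (μ v) (mem_univ x)
        rw [hsum v, hx] at hsplit
        have hzero : ∑ d' ∈ (univ : Finset D).erase x, μ v d' = 0 := by linarith
        exact (Finset.sum_eq_zero_iff_of_nonneg (fun d'' _ => hpos v d'')).1 hzero d
          (Finset.mem_erase.2 ⟨hd, mem_univ d⟩)
    · intro h v d
      obtain ⟨x, hx⟩ := h v
      rcases eq_or_ne d x with hd | hd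
      · rw [hx d, if_pos hd, abs_of_nonneg (by linarith [hmle1 d])]
        ring
      · rw [hx d, if_neg hd, abs_of_nonpos (by linarith [hmnn d])]
        ring
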